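/- Suppose u, m, M, I : [0, ∞) → ℝ solve the system u' = r₁m² − γ₀u, m' = τ_S I/(1+Cuⁿ) − dm − r₂um − r₁m², M' = (α₁u/(1+α₂u))(M̂−M)M − σM + λ_M, I' = τ₁uM/(1+τ₂u) − τ₃I with non-negative initial data, and suppose M is bounded above by some constant K. Then I is bounded: I(t) ≤ max(I(0), τ₁K/(τ₂τ₃)) for all t ≥ 0. -/

import Mathlib

open Set

/-- Boundedness of interleukins: if M is bounded by K, then
I(t) ≤ max (I(0)) (τ₁K/(τ₂τ₃)) for all t ≥ 0. -/
theorem stmt_19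
    (r₁ r₂ γ₀ τS C d α₁ α₂ Mhat σ lamM τ₁ τ₂ τ₃ : ℝ) (n : ℕ)
    (hr₁ : 0 < r₁) (hr₂ : 0 < r₂) (hγ₀ : 0 < γ₀) (hτS : 0 < τS) (hC : 0 < C)
    (hd : 0 < d) (hα₁ : 0 < α₁) (hα₂ : 0 < α₂) (hM : 0 < Mhat) (hσ : 0 < σ)
    (hlam : 0 < lamM) (hτ₁ : 0 < τ₁) (hτ₂ : 0 < τ₂) (hτ₃ : 0 < τ₃) (hn : 1 ≤ n)
    (u m M I : ℝ → ℝ) (K : ℝ)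
    (hu : ∀ t : ℝ, 0 ≤ t → HasDerivAt u (r₁ * (m t)^2 - γ₀ * u t) t)
    (hm : ∀ t : ℝ, 0 ≤ t → HasDerivAt m
      (τS * I t / (1 + C * (u t)^n) - d * m t - r₂ * u t * m t - r₁ * (m t)^2) t)
    (hM' : ∀ t : ℝ, 0 ≤ t → HasDerivAt M
      ((α₁ * u t / (1 + α₂ * u t)) * (Mhat - M t) * M t - σ * M t + lamM) t)
    (hI : ∀ t : ℝ, 0 ≤ t → HasDerivAt I
      (τ₁ * u t * M t / (1 + τ₂ * u t) - τ₃ * I t) t)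
    (h0 : 0 ≤ u 0 ∧ 0 ≤ m 0 ∧ 0 ≤ M 0 ∧ 0 ≤ I 0)
    (hK : ∀ t : ℝ, 0 ≤ t → M t ≤ K) :
    ∀ t : ℝ, 0 ≤ t → I t ≤ max (I 0) (τ₁ * K / (τ₂ * τ₃)) := by
  obtain ⟨hu0, hm0, hM0, hI0⟩ := h0
  have hK0 : 0 ≤ K := le_trans hM0 (hK 0 le_rfl)
  -- u is nonnegative on [0, ∞)
  set v : ℝ → ℝ := fun t => u t * Real.exp (γ₀ * t) with hv
  have hvderiv : ∀ t : ℝ, 0 ≤ t →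
      HasDerivAt v ((r₁ * (m t)^2 - γ₀ * u t) * Real.exp (γ₀ * t)
        + u t * (Real.exp (γ₀ * t) * γ₀)) t := by
    intro t ht
    have he : HasDerivAt (fun t => Real.exp (γ₀ * t)) (Real.exp (γ₀ * t) * γ₀) t := by
      simpa using (((hasDerivAt_id t).const_mul γ₀).exp)
    exact (hu t ht).mul he
  have hvmono : MonotoneOn v (Ici (0:ℝ)) := by
    apply monotoneOn_of_deriv_nonneg (convex_Ici 0)
    · intro t ht
      exact (hvderiv t ht).continuousAt.continuousWithinAt
    · intro t ht
      rw [interior_Ici] at ht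
      exact (hvderiv t (le_of_lt ht)).differentiableAt.differentiableWithinAt
    · intro t ht
      rw [interior_Ici] at ht
      rw [(hvderiv t ht.le).deriv]
      have := Real.exp_pos (γ₀ * t)
      nlinarith [sq_nonneg (m t), mul_nonneg hr₁.le (sq_nonneg (m t))]
  have hupos : ∀ t : ℝ, 0 ≤ t → 0 ≤ u t := by
    intro t ht
    have h1 : v 0 ≤ v t := hvmono (mem_Ici.mpr le_rfl) (mem_Ici.mpr ht) ht
    have h2 : (0:ℝ) ≤ v 0 := by
      simp only [hv, mul_zero, Real.exp_zero, mul_one]; exact hu0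
    have h3 : 0 ≤ v t := le_trans h2 h1
    simp only [hv] at h3
    have := Real.exp_pos (γ₀ * t)
    nlinarith
  -- the bound B
  set B : ℝ := max (I 0) (τ₁ * K / (τ₂ * τ₃)) with hB
  have hBge : τ₁ * K / τ₂ ≤ τ₃ * B := by
    have h1 : τ₁ * K / τ₂ = τ₃ * (τ₁ * K / (τ₂ * τ₃)) := by field_simp
    rw [h1]
    exact mul_le_mul_of_nonneg_left (le_max_right _ _) hτ₃.le
  -- consider f t = (I t - B) * exp (τ₃ t); show f antitone
  set f : ℝ → ℝ := fun t => (I t - B) * Real.exp (τ₃ * t) with hf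
  have hfderiv : ∀ t : ℝ, 0 ≤ t →
      HasDerivAt f ((τ₁ * u t * M t / (1 + τ₂ * u t) - τ₃ * I t) * Real.exp (τ₃ * t)
        + (I t - B) * (Real.exp (τ₃ * t) * τ₃)) t := by
    intro t ht
    have he : HasDerivAt (fun t => Real.exp (τ₃ * t)) (Real.exp (τ₃ * t) * τ₃) t := by
      simpa using (((hasDerivAt_id t).const_mul τ₃).exp)
    exact ((hI t ht).sub_const B).mul he
  have hfanti : AntitoneOn f (Ici (0:ℝ)) := by
    apply antitoneOn_of_deriv_nonpos (convex_Ici 0)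
    · intro t ht
      exact (hfderiv t ht).continuousAt.continuousWithinAt
    · intro t ht
      rw [interior_Ici] at ht
      exact (hfderiv t (le_of_lt ht)).differentiableAt.differentiableWithinAt
    · intro t ht
      rw [interior_Ici] at ht
      rw [(hfderiv t ht.le).deriv]
      have hexp := Real.exp_pos (τ₃ * t)
      have hut := hupos t ht.le
      have hden : (0:ℝ) < 1 + τ₂ * u t := by nlinarith
      have key : τ₁ * u t * M t / (1 + τ₂ * u t) ≤ τ₃ * B := by
        refine le_trans ?_ hBge
        rw [div_le_div_iff₀ hden hτ₂]
        have hMt := hK t ht.le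
        nlinarith [mul_nonneg hτ₁.le hut, mul_nonneg (mul_nonneg hτ₁.le hut) (sub_nonneg.mpr hMt),
          mul_nonneg hτ₂.le hut, mul_nonneg (mul_nonneg hτ₁.le hK0) (mul_nonneg hτ₂.le hut)]
      nlinarith
  intro t ht
  have h1 : f t ≤ f 0 := hfanti (mem_Ici.mpr le_rfl) (mem_Ici.mpr ht) ht
  have h2 : f 0 ≤ 0 := by
    simp only [hf, mul_zero, Real.exp_zero, mul_one]
    have : I 0 ≤ B := le_max_left _ _
    linarith
  have h3 : f t ≤ 0 := le_trans h1 h2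
  simp only [hf] at h3
  have hexp := Real.exp_pos (τ₃ * t)
  nlinarith [h3]
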